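/- Let A be an m × n complex matrix and B an m' × n' complex matrix with m, m' ≥ 1 and n, n' ≥ 2, all of whose columns are nonzero. Let A ⊗ B denote the Kronecker product, the (m·m') × (n·n') matrix with entries (A ⊗ B)((r,r'), (j,j')) = A(r,j)·B(r',j'), whose column indexed by (j,j') is the Kronecker product of the j-th column of A and the j'-th column of B. Then the coherence of A ⊗ B equals max(μ_A, μ_B), where μ_A and μ_B are the coherences of A and B respectively. -/

import Mathlib

open scoped ComplexInnerProductSpace

theorem stmt7 (m n m' n' : ℕ) (hm : 1 ≤ m) (hm' : 1 ≤ m') (hn : 2 ≤ n) (hn' : 2 ≤ n')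
    (a : Fin n → EuclideanSpace ℂ (Fin m)) (b : Fin n' → EuclideanSpace ℂ (Fin m'))
    (ha0 : ∀ j, a j ≠ 0) (hb0 : ∀ j, b j ≠ 0)
    (μA μB : ℝ)
    (hμA : ∀ i j : Fin n, i ≠ j → ‖⟪a i, a j⟫‖ / (‖a i‖ * ‖a j‖) ≤ μA)
    (hμA' : ∃ i j : Fin n, i ≠ j ∧ ‖⟪a i, a j⟫‖ / (‖a i‖ * ‖a j‖) = μA)
    (hμB : ∀ i j : Fin n', i ≠ j → ‖⟪b i, b j⟫‖ / (‖b i‖ * ‖b j‖) ≤ μB)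
    (hμB' : ∃ i j : Fin n', i ≠ j ∧ ‖⟪b i, b j⟫‖ / (‖b i‖ * ‖b j‖) = μB)
    (c : Fin n × Fin n' → EuclideanSpace ℂ (Fin m × Fin m'))
    (hc : ∀ j j', c (j, j') = WithLp.toLp 2 (fun rr : Fin m × Fin m' => a j rr.1 * b j' rr.2)) :
    (∀ q q' : Fin n × Fin n', q ≠ q' →
      ‖⟪c q, c q'⟫‖ / (‖c q‖ * ‖c q'‖) ≤ max μA μB) ∧
    (∃ q q' : Fin n × Fin n', q ≠ q' ∧
      ‖⟪c q, c q'⟫‖ / (‖c q‖ * ‖c q'‖) = max μA μB) := by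
  have hpa : ∀ j, (0:ℝ) < ‖a j‖ := fun j => norm_pos_iff.mpr (ha0 j)
  have hpb : ∀ j, (0:ℝ) < ‖b j‖ := fun j => norm_pos_iff.mpr (hb0 j)
  have hinner : ∀ (j k : Fin n) (j' k' : Fin n'),
      ⟪c (j, j'), c (k, k')⟫ = ⟪a j, a k⟫ * ⟪b j', b k'⟫ := by
    intro j k j' k'
    simp only [hc, PiLp.inner_apply, PiLp.toLp_apply, RCLike.inner_apply]
    rw [Fintype.sum_prod_type, Finset.sum_mul_sum]
    refine Finset.sum_congr rfl fun r _ => Finset.sum_congr rfl fun r' _ => ?_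
    simp only [map_mul]
    ring
  have hnormc : ∀ (j : Fin n) (j' : Fin n'), ‖c (j, j')‖ = ‖a j‖ * ‖b j'‖ := by
    intro j j'
    have h := hinner j j j' j'
    rw [inner_self_eq_norm_sq_to_K, inner_self_eq_norm_sq_to_K,
      inner_self_eq_norm_sq_to_K] at h
    have h2 : ‖c (j, j')‖ ^ 2 = (‖a j‖ * ‖b j'‖) ^ 2 := by
      rw [mul_pow]; exact_mod_cast h
    have hx := Real.sqrt_sq (norm_nonneg (c (j, j')))
    have hy := Real.sqrt_sq (by positivity : (0:ℝ) ≤ ‖a j‖ * ‖b j'‖)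
    rw [← hx, ← hy, h2]
  have hratio : ∀ (j k : Fin n) (j' k' : Fin n'),
      ‖⟪c (j, j'), c (k, k')⟫‖ / (‖c (j, j')‖ * ‖c (k, k')‖) =
      (‖⟪a j, a k⟫‖ / (‖a j‖ * ‖a k‖)) * (‖⟪b j', b k'⟫‖ / (‖b j'‖ * ‖b k'‖)) := by
    intro j k j' k'
    rw [hinner, norm_mul, hnormc, hnormc]
    rw [div_mul_div_comm]
    ring_nf
  have hAself : ∀ j : Fin n, ‖⟪a j, a j⟫‖ / (‖a j‖ * ‖a j‖) = 1 := by
    intro j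
    rw [inner_self_eq_norm_sq_to_K, norm_pow, RCLike.norm_ofReal, abs_norm, sq]
    exact div_self (mul_pos (hpa j) (hpa j)).ne'
  have hBself : ∀ j : Fin n', ‖⟪b j, b j⟫‖ / (‖b j‖ * ‖b j‖) = 1 := by
    intro j
    rw [inner_self_eq_norm_sq_to_K, norm_pow, RCLike.norm_ofReal, abs_norm, sq]
    exact div_self (mul_pos (hpb j) (hpb j)).ne'
  have hA1 : ∀ j k : Fin n, ‖⟪a j, a k⟫‖ / (‖a j‖ * ‖a k‖) ≤ 1 := by
    intro j k
    rw [div_le_one (mul_pos (hpa j) (hpa k))]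
    exact norm_inner_le_norm _ _
  have hB1 : ∀ j k : Fin n', ‖⟪b j, b k⟫‖ / (‖b j‖ * ‖b k‖) ≤ 1 := by
    intro j k
    rw [div_le_one (mul_pos (hpb j) (hpb k))]
    exact norm_inner_le_norm _ _
  have hμA0 : 0 ≤ μA := by
    obtain ⟨i, j, hij, heq⟩ := hμA'
    rw [← heq]; positivity
  have hμB0 : 0 ≤ μB := by
    obtain ⟨i, j, hij, heq⟩ := hμB'
    rw [← heq]; positivity
  constructor
  · rintro ⟨j, j'⟩ ⟨k, k'⟩ hne
    rw [hratio]
    by_cases hjk : j = k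
    · subst hjk
      have hjk' : j' ≠ k' := fun h => hne (by rw [h])
      rw [hAself, one_mul]
      exact le_trans (hμB _ _ hjk') (le_max_right _ _)
    · have h1 : ‖⟪a j, a k⟫‖ / (‖a j‖ * ‖a k‖) ≤ μA := hμA _ _ hjk
      have h2 : ‖⟪b j', b k'⟫‖ / (‖b j'‖ * ‖b k'‖) ≤ 1 := hB1 _ _
      have h3 : (0:ℝ) ≤ ‖⟪b j', b k'⟫‖ / (‖b j'‖ * ‖b k'‖) := by positivity
      calc ‖⟪a j, a k⟫‖ / (‖a j‖ * ‖a k‖) * (‖⟪b j', b k'⟫‖ / (‖b j'‖ * ‖b k'‖))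
          ≤ μA * 1 := mul_le_mul h1 h2 h3 hμA0
        _ = μA := mul_one _
        _ ≤ max μA μB := le_max_left _ _
  · rcases le_total μB μA with hle | hle
    · obtain ⟨i, j, hij, heq⟩ := hμA'
      have z : Fin n' := ⟨0, by omega⟩
      refine ⟨(i, z), (j, z), fun h => hij (congrArg Prod.fst h), ?_⟩
      rw [hratio, hBself, mul_one, heq, max_eq_left hle]
    · obtain ⟨i, j, hij, heq⟩ := hμB'
      have z : Fin n := ⟨0, by omega⟩
      refine ⟨(z, i), (z, j), fun h => hij (congrArg Prod.snd h), ?_⟩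
      rw [hratio, hAself, one_mul, heq, max_eq_right hle]
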